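/- (Lemma 1, discrete version.) In the discrete case-control model, the modified profile score has zero expectation at the true parameter: Σ_{y,z,w} (a_y/f_y) P(w) p(Θ_0, y, z, w) · ∇_Θ [ log p(Θ, y, z, w) − log(1 + λ_0 (L(Θ, w) − f)) ]|_{Θ=Θ_0} = 0, where f_true := f and f_false := 1 − f. -/

import Mathlib

open Finset

private lemma sum_rot3 {α β γ M : Type*} [Fintype α] [Fintype β] [Fintype γ]
    [AddCommMonoid M] (g : α → β → γ → M) :
    ∑ a : α, ∑ b : β, ∑ c : γ, g a b c = ∑ c : γ, ∑ a : α, ∑ b : β, g a b c := by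
  calc ∑ a : α, ∑ b : β, ∑ c : γ, g a b c
      = ∑ a : α, ∑ c : γ, ∑ b : β, g a b c :=
        Finset.sum_congr rfl fun a _ => Finset.sum_comm
    _ = ∑ c : γ, ∑ a : α, ∑ b : β, g a b c := Finset.sum_comm

/-- Lemma 1 of the paper (discrete version): the modified profile score has
zero expectation at the true parameter under case-control sampling. Here
`L Θ w = ∑ z, p Θ true z w`, `f_true = f`, `f_false = 1 - f`,
`a_true = a₁`, `a_false = a₀`, and `λ₀ = a₁/f - a₀/(1-f)`. -/
theorem modified_profile_score_unbiased {W Z : Type*} [Fintype W] [Fintype Z]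
    (k : ℕ) (p : (Fin k → ℝ) → Bool → Z → W → ℝ) (Θ₀ : Fin k → ℝ)
    (hp_nonneg : ∀ Θ y z w, 0 ≤ p Θ y z w)
    (hp_sum : ∀ Θ w, ∑ y : Bool, ∑ z : Z, p Θ y z w = 1)
    (hp_diff : ∀ y z w, DifferentiableAt ℝ (fun Θ => p Θ y z w) Θ₀)
    (hp_pos : ∀ y z w, 0 < p Θ₀ y z w)
    (P : W → ℝ) (hP_nonneg : ∀ w, 0 ≤ P w) (hP_sum : ∑ w, P w = 1)
    (a₀ a₁ : ℝ) (ha₀ : 0 < a₀) (ha₁ : 0 < a₁) (ha : a₀ + a₁ = 1)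
    (f : ℝ) (hf : f = ∑ w, P w * ∑ z : Z, p Θ₀ true z w)
    (hf0 : 0 < f) (hf1 : f < 1)
    (lam₀ : ℝ) (hlam : lam₀ = a₁ / f - a₀ / (1 - f)) :
    ∑ y : Bool, ∑ z : Z, ∑ w : W,
      ((if y then a₁ else a₀) / (if y then f else 1 - f) * P w * p Θ₀ y z w) •
        fderiv ℝ
          (fun Θ => Real.log (p Θ y z w)
            - Real.log (1 + lam₀ * ((∑ z' : Z, p Θ true z' w) - f))) Θ₀
      = 0 := by
  classical
  have hf1' : (0:ℝ) < 1 - f := by linarith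
  rw [sum_rot3]
  refine Finset.sum_eq_zero fun w _ => ?_
  set Dp : Bool → Z → (Fin k → ℝ) →L[ℝ] ℝ :=
    fun y z => fderiv ℝ (fun Θ => p Θ y z w) Θ₀ with hDpdef
  set S : (Fin k → ℝ) →L[ℝ] ℝ := ∑ z : Z, Dp true z with hSdef
  set L : ℝ := ∑ z : Z, p Θ₀ true z w with hLdef
  have hZ : Nonempty Z := by
    by_contra h
    rw [not_nonempty_iff] at h
    have := hp_sum Θ₀ w
    simp [Finset.sum_const] at this
  have hLpos : 0 < L := Finset.sum_pos (fun z _ => hp_pos true z w) Finset.univ_nonempty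
  have hLlt : ∑ z : Z, p Θ₀ false z w = 1 - L := by
    have := hp_sum Θ₀ w
    rw [Fintype.sum_bool] at this
    linarith
  have hL1 : L < 1 := by
    have h2 : 0 < ∑ z : Z, p Θ₀ false z w :=
      Finset.sum_pos (fun z _ => hp_pos false z w) Finset.univ_nonempty
    linarith
  set D : ℝ := 1 + lam₀ * (L - f) with hDdef
  have hDeq : D = a₁ / f * L + a₀ / (1 - f) * (1 - L) := by
    have ha' : a₀ = 1 - a₁ := by linarith
    rw [hDdef, hlam, ha']
    field_simp
    ring
  have hDpos : 0 < D := by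
    rw [hDeq]
    have h1 := mul_pos (div_pos ha₁ hf0) hLpos
    have h2 := mul_pos (div_pos ha₀ hf1') (by linarith : (0:ℝ) < 1 - L)
    linarith
  have hD' : D ≠ 0 := ne_of_gt hDpos
  have hSder : HasFDerivAt (fun Θ => ∑ z' : Z, p Θ true z' w) S Θ₀ :=
    HasFDerivAt.fun_sum fun z _ => (hp_diff true z w).hasFDerivAt
  have hg : HasFDerivAt (fun Θ => 1 + lam₀ * ((∑ z' : Z, p Θ true z' w) - f))
      (lam₀ • S) Θ₀ := by
    simpa using ((hSder.sub_const f).const_mul lam₀).const_add 1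
  have hfd : ∀ y z,
      fderiv ℝ (fun Θ => Real.log (p Θ y z w)
        - Real.log (1 + lam₀ * ((∑ z' : Z, p Θ true z' w) - f))) Θ₀
      = (p Θ₀ y z w)⁻¹ • Dp y z - (lam₀ / D) • S := by
    intro y z
    have h1 : HasFDerivAt (fun Θ => p Θ y z w) (Dp y z) Θ₀ :=
      (hp_diff y z w).hasFDerivAt
    have hlog1 := h1.log (ne_of_gt (hp_pos y z w))
    have hlog2 := hg.log (ne_of_gt (by simpa [← hLdef, ← hDdef] using hDpos))
    rw [(hlog1.fun_sub hlog2).fderiv, smul_smul, div_eq_inv_mul]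
  have hfalse : ∑ z : Z, Dp false z = -S := by
    have hsum : HasFDerivAt (fun Θ => ∑ y : Bool, ∑ z : Z, p Θ y z w)
        (∑ y : Bool, ∑ z : Z, Dp y z) Θ₀ :=
      HasFDerivAt.fun_sum fun y _ => HasFDerivAt.fun_sum fun z _ => (hp_diff y z w).hasFDerivAt
    have heq : (fun Θ => ∑ y : Bool, ∑ z : Z, p Θ y z w) = fun _ => (1:ℝ) :=
      funext fun Θ => hp_sum Θ w
    rw [heq] at hsum
    have h0 : (∑ y : Bool, ∑ z : Z, Dp y z) = 0 :=
      hsum.unique (hasFDerivAt_const 1 Θ₀)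
    rw [Fintype.sum_bool] at h0
    rw [hSdef]
    exact eq_neg_of_add_eq_zero_right h0
  -- rewrite each term
  have step1 : ∑ y : Bool, ∑ z : Z,
      ((if y then a₁ else a₀) / (if y then f else 1 - f) * P w * p Θ₀ y z w) •
        fderiv ℝ (fun Θ => Real.log (p Θ y z w)
          - Real.log (1 + lam₀ * ((∑ z' : Z, p Θ true z' w) - f))) Θ₀
      = ∑ y : Bool, ∑ z : Z,
        (((if y then a₁ else a₀) / (if y then f else 1 - f) * P w) • Dp y z
          - ((if y then a₁ else a₀) / (if y then f else 1 - f) * P w * p Θ₀ y z w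
              * (lam₀ / D)) • S) := by
    refine Finset.sum_congr rfl fun y _ => Finset.sum_congr rfl fun z _ => ?_
    rw [hfd y z, smul_sub, smul_smul, smul_smul, mul_assoc
        ((if y then a₁ else a₀) / (if y then f else 1 - f) * P w),
      mul_inv_cancel₀ (ne_of_gt (hp_pos y z w)), mul_one]
  rw [step1]
  have step2 : ∑ y : Bool, ∑ z : Z,
      (((if y then a₁ else a₀) / (if y then f else 1 - f) * P w) • Dp y z
        - ((if y then a₁ else a₀) / (if y then f else 1 - f) * P w * p Θ₀ y z w
            * (lam₀ / D)) • S)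
      = (∑ y : Bool, ∑ z : Z,
          ((if y then a₁ else a₀) / (if y then f else 1 - f) * P w) • Dp y z)
        - (∑ y : Bool, ∑ z : Z,
            (if y then a₁ else a₀) / (if y then f else 1 - f) * P w * p Θ₀ y z w
              * (lam₀ / D)) • S := by
    rw [Finset.sum_smul]
    rw [← Finset.sum_sub_distrib]
    refine Finset.sum_congr rfl fun y _ => ?_
    rw [Finset.sum_smul, ← Finset.sum_sub_distrib]
  rw [step2]
  have hpart1 : (∑ y : Bool, ∑ z : Z,
      ((if y then a₁ else a₀) / (if y then f else 1 - f) * P w) • Dp y z)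
      = (a₁ / f * P w) • S + (a₀ / (1 - f) * P w) • (-S) := by
    rw [Fintype.sum_bool]
    simp only [Bool.false_eq_true, if_false, if_true, reduceIte]
    rw [← Finset.smul_sum, ← Finset.smul_sum, hfalse, hSdef]
  have hpart2 : (∑ y : Bool, ∑ z : Z,
      (if y then a₁ else a₀) / (if y then f else 1 - f) * P w * p Θ₀ y z w
        * (lam₀ / D)) = lam₀ * P w := by
    rw [Fintype.sum_bool]
    simp only [Bool.false_eq_true, if_false, if_true, reduceIte]
    rw [← Finset.sum_mul, ← Finset.sum_mul, ← Finset.mul_sum, ← Finset.mul_sum,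
      ← hLdef, hLlt]
    have hkey : a₁ / f * P w * L * (lam₀ / D) + a₀ / (1 - f) * P w * (1 - L) * (lam₀ / D)
        = P w * D * (lam₀ / D) := by rw [hDeq]; ring
    rw [hkey, mul_assoc, mul_div_cancel₀ _ hD']
    ring
  rw [hpart1, hpart2]
  have hcomb : (a₁ / f * P w) • S + (a₀ / (1 - f) * P w) • -S - (lam₀ * P w) • S
      = (a₁ / f * P w - a₀ / (1 - f) * P w - lam₀ * P w) • S := by
    module
  rw [hcomb, show a₁ / f * P w - a₀ / (1 - f) * P w - lam₀ * P w = 0 from by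
    rw [hlam]; ring, zero_smul]
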